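/- Let K be an algebraically closed field of characteristic zero and consider X = V(T_0^{l_0} + T_1^{l_1} + T_{21} T_{22}···T_{2n_2}) with n_2 ≥ 1 (all exponents in the third monomial equal to 1). Fix nonzero constants c_2,...,c_{n_2} ∈ K*. Then the group SAut(X) generated by all G_a-subgroups of Aut(X) acts transitively on the subvariety X(c_2,...,c_{n_2}) = V(T_{22}−c_2,...,T_{2n_2}−c_{n_2}) ∩ X. -/

import Mathlib

set_option synthInstance.maxHeartbeats 1000000
set_option maxHeartbeats 1000000

/-- A derivation is locally nilpotent if every element is annihilated by some power. -/
def IsLND {K A : Type*} [CommSemiring K] [CommRing A] [Algebra K A]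
    (D : Derivation K A A) : Prop :=
  ∀ a : A, ∃ n : ℕ, (⇑D)^[n] a = 0

/-- The exponential of a locally nilpotent derivation:
`exp(δ)(a) = ∑ δ^[n](a) / n!` (a finite sum for each `a`). -/
noncomputable def LNDexp {K A : Type*} [Field K] [CharZero K] [CommRing A] [Algebra K A]
    (δ : Derivation K A A) (a : A) : A :=
  ∑ᶠ n : ℕ, ((n.factorial : K)⁻¹) • (⇑δ)^[n] a

/-- The subgroup of special automorphisms: the subgroup of `Aut(X)` generated by all
one-parameter unipotent subgroups `exp(δ)` for locally nilpotent derivations `δ`. -/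
noncomputable def SAut (K A : Type*) [Field K] [CharZero K] [CommRing A] [Algebra K A] :
    Subgroup (A ≃ₐ[K] A) :=
  Subgroup.closure {φ : A ≃ₐ[K] A |
    ∃ δ : Derivation K A A, IsLND δ ∧ ∀ a, φ a = LNDexp δ a}

set_option linter.unusedSectionVars false

section Gen
variable {K A : Type*} [Field K] [CharZero K] [CommRing A] [Algebra K A]

theorem myiter_add (δ : Derivation K A A) (n : ℕ) (a b : A) :
    (⇑δ)^[n] (a + b) = (⇑δ)^[n] a + (⇑δ)^[n] b := by
  induction n generalizing a b with
  | zero => rfl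
  | succ n ih => rw [Function.iterate_succ_apply, map_add, ih]; rfl

theorem myiter_smul (δ : Derivation K A A) (n : ℕ) (t : K) (a : A) :
    (⇑δ)^[n] (t • a) = t • (⇑δ)^[n] a := by
  induction n generalizing a with
  | zero => rfl
  | succ n ih => rw [Function.iterate_succ_apply, Derivation.map_smul, ih]; rfl

theorem myiter_zero (δ : Derivation K A A) (n : ℕ) : (⇑δ)^[n] (0 : A) = 0 := by
  induction n with
  | zero => rfl
  | succ n ih => rw [Function.iterate_succ_apply, map_zero, ih]

theorem myiter_sum (δ : Derivation K A A) (n : ℕ) {ι : Type*} (s : Finset ι) (f : ι → A) :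
    (⇑δ)^[n] (∑ i ∈ s, f i) = ∑ i ∈ s, (⇑δ)^[n] (f i) := by
  induction n with
  | zero => rfl
  | succ n ih => rw [Function.iterate_succ_apply', ih, map_sum]
                 simp only [← Function.iterate_succ_apply' (⇑δ)]

theorem mynsmul (δ : Derivation K A A) (m : ℕ) (a : A) :
    δ (m • a) = m • δ a := by
  rw [← Nat.cast_smul_eq_nsmul K, Derivation.map_smul, Nat.cast_smul_eq_nsmul]

theorem myiter_stable (δ : Derivation K A A) {n m : ℕ} {a : A}
    (h : (⇑δ)^[n] a = 0) (hnm : n ≤ m) : (⇑δ)^[m] a = 0 := by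
  rw [← Nat.sub_add_cancel hnm, Function.iterate_add_apply, h, myiter_zero]

theorem iter_leibniz (δ : Derivation K A A) (a b : A) (n : ℕ) :
    (⇑δ)^[n] (a * b) =
      ∑ k ∈ Finset.range (n + 1), n.choose k • ((⇑δ)^[k] a * (⇑δ)^[n - k] b) := by
  induction n with
  | zero => simp
  | succ n ih =>
    rw [Function.iterate_succ_apply', ih, map_sum]
    have hterm : ∀ k ∈ Finset.range (n + 1),
        δ (n.choose k • ((⇑δ)^[k] a * (⇑δ)^[n - k] b)) =
          n.choose k • ((⇑δ)^[k + 1] a * (⇑δ)^[n - k] b) +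
          n.choose k • ((⇑δ)^[k] a * (⇑δ)^[n - k + 1] b) := by
      intro k _
      rw [mynsmul, Derivation.leibniz]
      simp only [smul_add, smul_eq_mul, nsmul_eq_mul, ← Function.iterate_succ_apply' (⇑δ)]
      ring
    rw [Finset.sum_congr rfl hterm, Finset.sum_add_distrib]
    conv_rhs => rw [Finset.sum_range_succ']
    simp only [Nat.succ_sub_succ_eq_sub, Nat.choose_succ_succ, add_smul,
      Nat.choose_zero_right, one_smul, Nat.sub_zero, Function.iterate_zero_apply]
    rw [Finset.sum_add_distrib, add_assoc]
    congr 1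
    -- ⊢ ∑ k ∈ range (n+1), n.choose k • (A k * B (n-k+1))
    --   = ∑ k ∈ range (n+1), n.choose (k+1) • (A (k+1) * B (n-k)) + a * B (n+1)
    rw [Finset.sum_range_succ (fun k => n.choose (k+1) • ((⇑δ)^[k+1] a * (⇑δ)^[n-k] b))]
    simp only [Nat.choose_succ_self, zero_smul, add_zero]
    rw [Finset.sum_range_succ' (fun k => n.choose k • ((⇑δ)^[k] a * (⇑δ)^[n - k + 1] b))]
    simp only [Nat.choose_zero_right, one_smul, Function.iterate_zero_apply, Nat.sub_zero]
    congr 1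
    refine Finset.sum_congr rfl fun k hk => ?_
    rw [Finset.mem_range] at hk
    have h3 : n - (k+1) + 1 = n - k := by omega
    rw [h3]
end Gen

section Gen2
variable {K A : Type*} [Field K] [CharZero K] [CommRing A] [Algebra K A]

theorem nil_mul {δ : Derivation K A A} {a b : A} {n m : ℕ}
    (ha : (⇑δ)^[n] a = 0) (hb : (⇑δ)^[m] b = 0) : (⇑δ)^[n + m] (a * b) = 0 := by
  rw [iter_leibniz]
  refine Finset.sum_eq_zero fun k hk => ?_
  rw [Finset.mem_range] at hk
  rcases le_or_gt n k with h | h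
  · rw [myiter_stable δ ha h, zero_mul, smul_zero]
  · rw [myiter_stable δ hb (by omega : m ≤ n + m - k), mul_zero, smul_zero]

/-- the subalgebra of elements annihilated by some iterate of δ -/
def nilAlg (δ : Derivation K A A) : Subalgebra K A where
  carrier := {a | ∃ n, (⇑δ)^[n] a = 0}
  mul_mem' := by
    rintro a b ⟨n, ha⟩ ⟨m, hb⟩
    exact ⟨n + m, nil_mul ha hb⟩
  add_mem' := by
    rintro a b ⟨n, ha⟩ ⟨m, hb⟩
    refine ⟨max n m, ?_⟩
    rw [myiter_add, myiter_stable δ ha (le_max_left _ _),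
      myiter_stable δ hb (le_max_right _ _), add_zero]
  algebraMap_mem' := fun r => ⟨1, by
    simp only [Function.iterate_one]
    exact Derivation.map_algebraMap δ r⟩

theorem nilAlg_iff_der {δ : Derivation K A A} {a : A} :
    a ∈ nilAlg δ ↔ δ a ∈ nilAlg δ := by
  constructor
  · rintro ⟨n, h⟩
    exact ⟨n, by rw [← Function.iterate_succ_apply, Function.iterate_succ_apply', h, map_zero]⟩
  · rintro ⟨n, h⟩
    exact ⟨n + 1, by rwa [Function.iterate_succ_apply]⟩

/-- triangle reindexing -/
theorem sum_triangle (M : ℕ) (f : ℕ → ℕ → A) (hf : ∀ i j, M ≤ i + j → f i j = 0) :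
    ∑ n ∈ Finset.range M, ∑ k ∈ Finset.range (n + 1), f k (n - k) =
      ∑ i ∈ Finset.range M, ∑ j ∈ Finset.range M, f i j := by
  classical
  rw [← Finset.sum_sigma (Finset.range M) (fun n => Finset.range (n + 1))
    (fun p => f p.2 (p.1 - p.2)), ← Finset.sum_product']
  rw [← Finset.sum_filter_of_ne (p := fun p : ℕ × ℕ => p.1 + p.2 < M)
    (fun p _ hp => by by_contra hlt; exact hp (hf p.1 p.2 (by omega)))]
  refine Finset.sum_nbij' (fun p => (p.2, p.1 - p.2)) (fun q => ⟨q.1 + q.2, q.1⟩) ?_ ?_ ?_ ?_ ?_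
  · rintro ⟨n, k⟩ hp
    simp only [Finset.mem_sigma, Finset.mem_range] at hp
    simp only [Finset.mem_filter, Finset.mem_product, Finset.mem_range]
    omega
  · rintro ⟨i, j⟩ hq
    simp only [Finset.mem_filter, Finset.mem_product, Finset.mem_range] at hq
    simp only [Finset.mem_sigma, Finset.mem_range]
    omega
  · rintro ⟨n, k⟩ hp
    simp only [Finset.mem_sigma, Finset.mem_range] at hp
    simp only [Sigma.mk.inj_iff]
    constructor
    · omega
    · exact heq_of_eq rfl
  · rintro ⟨i, j⟩ hq
    show ((i : ℕ), i + j - i) = (i, j)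
    rw [Nat.add_sub_cancel_left]
  · rintro ⟨n, k⟩ hp
    rfl

theorem LNDexp_eq_sum {δ : Derivation K A A} {a : A} {N : ℕ} (h : (⇑δ)^[N] a = 0) :
    LNDexp δ a = ∑ n ∈ Finset.range N, ((n.factorial : K)⁻¹) • (⇑δ)^[n] a := by
  apply finsum_eq_finset_sum_of_support_subset
  intro n hn
  simp only [Function.mem_support] at hn
  simp only [Finset.coe_range, Set.mem_Iio]
  by_contra hc
  exact hn (by rw [myiter_stable δ h (by omega), smul_zero])

theorem coeff_eq {K : Type*} [Field K] [CharZero K] {n k : ℕ} (hk : k ≤ n) :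
    ((n.factorial : K))⁻¹ * (n.choose k : K) =
      ((k.factorial : K))⁻¹ * (((n - k).factorial : K))⁻¹ := by
  have h : ((n.choose k : K) * k.factorial * (n - k).factorial) = n.factorial := by
    exact_mod_cast congrArg (Nat.cast (R := K)) (Nat.choose_mul_factorial_mul_factorial hk)
  have h1 : (k.factorial : K) ≠ 0 := Nat.cast_ne_zero.mpr k.factorial_ne_zero
  have h2 : (((n - k).factorial : K)) ≠ 0 := Nat.cast_ne_zero.mpr (n - k).factorial_ne_zero
  have h3 : ((n.factorial : K)) ≠ 0 := Nat.cast_ne_zero.mpr n.factorial_ne_zero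
  field_simp
  linear_combination h

theorem LNDexp_mul {δ : Derivation K A A} (hδ : IsLND δ) (a b : A) :
    LNDexp δ (a * b) = LNDexp δ a * LNDexp δ b := by
  obtain ⟨Na, ha⟩ := hδ a
  obtain ⟨Nb, hb⟩ := hδ b
  have hab : (⇑δ)^[Na + Nb] (a * b) = 0 := nil_mul ha hb
  rw [LNDexp_eq_sum hab, LNDexp_eq_sum (myiter_stable δ ha (Nat.le_add_right _ _)),
    LNDexp_eq_sum (myiter_stable δ hb (Nat.le_add_left _ _)), Finset.sum_mul_sum]
  rw [← sum_triangle (Na + Nb)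
    (fun i j => (((i.factorial : K))⁻¹ • (⇑δ)^[i] a) * (((j.factorial : K))⁻¹ • (⇑δ)^[j] b))
    (by
      intro i j hij
      rcases le_or_gt Na i with h | h
      · rw [myiter_stable δ ha h, smul_zero, zero_mul]
      · rw [myiter_stable δ hb (by omega : Nb ≤ j), smul_zero, mul_zero])]
  refine Finset.sum_congr rfl fun n hn => ?_
  rw [iter_leibniz, Finset.smul_sum]
  refine Finset.sum_congr rfl fun k hk => ?_
  rw [Finset.mem_range] at hk
  rw [← Nat.cast_smul_eq_nsmul K, smul_smul, smul_mul_smul_comm]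
  rw [coeff_eq (by omega : k ≤ n)]

theorem LNDexp_add {δ : Derivation K A A} (hδ : IsLND δ) (a b : A) :
    LNDexp δ (a + b) = LNDexp δ a + LNDexp δ b := by
  obtain ⟨Na, ha⟩ := hδ a
  obtain ⟨Nb, hb⟩ := hδ b
  have ha' : (⇑δ)^[max Na Nb] a = 0 := myiter_stable δ ha (le_max_left _ _)
  have hb' : (⇑δ)^[max Na Nb] b = 0 := myiter_stable δ hb (le_max_right _ _)
  have hab : (⇑δ)^[max Na Nb] (a + b) = 0 := by rw [myiter_add, ha', hb', add_zero]
  rw [LNDexp_eq_sum hab, LNDexp_eq_sum ha', LNDexp_eq_sum hb', ← Finset.sum_add_distrib]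
  exact Finset.sum_congr rfl fun n _ => by rw [myiter_add, smul_add]

theorem LNDexp_algebraMap (δ : Derivation K A A) (r : K) :
    LNDexp δ (algebraMap K A r) = algebraMap K A r := by
  have h : (⇑δ)^[1] (algebraMap K A r) = 0 := by
    simpa using Derivation.map_algebraMap δ r
  rw [LNDexp_eq_sum h]
  simp

theorem LNDexp_one (δ : Derivation K A A) : LNDexp δ (1 : A) = 1 := by
  have := LNDexp_algebraMap δ 1
  rwa [map_one] at this

theorem LNDexp_zero (δ : Derivation K A A) : LNDexp δ (0 : A) = 0 := by
  have h : (⇑δ)^[1] (0 : A) = 0 := myiter_zero δ 1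
  rw [LNDexp_eq_sum h]
  simp

/-- exp of an LND as an algebra homomorphism -/
noncomputable def expAlgHom (δ : Derivation K A A) (hδ : IsLND δ) : A →ₐ[K] A where
  toFun := LNDexp δ
  map_one' := LNDexp_one δ
  map_mul' := LNDexp_mul hδ
  map_zero' := LNDexp_zero δ
  map_add' := LNDexp_add hδ
  commutes' := LNDexp_algebraMap δ

theorem iter_neg (δ : Derivation K A A) (m : ℕ) (a : A) :
    (⇑(-δ))^[m] a = ((-1 : K) ^ m) • (⇑δ)^[m] a := by
  induction m with
  | zero => simp
  | succ m ih =>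
    rw [Function.iterate_succ_apply', Function.iterate_succ_apply', ih, Derivation.neg_apply,
      Derivation.map_smul, ← neg_smul, pow_succ]
    ring_nf

theorem IsLND_neg {δ : Derivation K A A} (hδ : IsLND δ) : IsLND (-δ) := fun a => by
  obtain ⟨n, hn⟩ := hδ a
  exact ⟨n, by rw [iter_neg, hn, smul_zero]⟩

theorem alt_coeff {K : Type*} [Field K] [CharZero K] (n : ℕ) :
    ∑ k ∈ Finset.range (n + 1),
        ((k.factorial : K))⁻¹ * ((((n - k).factorial : K))⁻¹ * (-1 : K) ^ (n - k)) =
      if n = 0 then 1 else 0 := by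
  have h := Int.alternating_sum_range_choose (n := n)
  have h2 : ∑ k ∈ Finset.range (n + 1), (-1 : K) ^ k * (n.choose k : K) =
      if n = 0 then 1 else 0 := by
    have := congrArg (fun z : ℤ => (z : K)) h
    push_cast at this
    rw [this]
  have h3 : ∑ k ∈ Finset.range (n + 1), (-1 : K) ^ (n - k) * (n.choose k : K) =
      if n = 0 then 1 else 0 := by
    rw [← h2]
    rw [← Finset.sum_range_reflect (fun k => (-1 : K) ^ k * (n.choose k : K)) (n + 1)]
    refine Finset.sum_congr rfl fun k hk => ?_
    rw [Finset.mem_range] at hk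
    have e1 : n + 1 - 1 - k = n - k := by omega
    rw [e1, Nat.choose_symm (by omega : k ≤ n)]
  calc ∑ k ∈ Finset.range (n + 1),
        ((k.factorial : K))⁻¹ * ((((n - k).factorial : K))⁻¹ * (-1 : K) ^ (n - k))
      = ∑ k ∈ Finset.range (n + 1),
        ((n.factorial : K))⁻¹ * ((-1 : K) ^ (n - k) * (n.choose k : K)) := by
        refine Finset.sum_congr rfl fun k hk => ?_
        rw [Finset.mem_range] at hk
        rw [show ((n.factorial : K))⁻¹ * ((-1 : K) ^ (n - k) * (n.choose k : K)) =
          (((n.factorial : K))⁻¹ * (n.choose k : K)) * (-1 : K) ^ (n - k) from by ring,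
          coeff_eq (by omega : k ≤ n)]
        ring
    _ = ((n.factorial : K))⁻¹ * ∑ k ∈ Finset.range (n + 1),
          ((-1 : K) ^ (n - k) * (n.choose k : K)) := by rw [Finset.mul_sum]
    _ = if n = 0 then 1 else 0 := by
        rw [h3]
        split
        · subst ‹n = 0›; simp
        · simp

theorem LNDexp_leftinv {δ : Derivation K A A} (hδ : IsLND δ) (a : A) :
    LNDexp δ (LNDexp (-δ) a) = a := by
  obtain ⟨N0, h0⟩ := hδ a
  have h : (⇑δ)^[N0 + 1] a = 0 := myiter_stable δ h0 (Nat.le_succ _)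
  set N := N0 + 1 with hN
  have hneg : (⇑(-δ))^[N] a = 0 := by rw [iter_neg, h, smul_zero]
  rw [LNDexp_eq_sum hneg]
  simp_rw [iter_neg, smul_smul]
  have hkill : (⇑δ)^[N] (∑ m ∈ Finset.range N,
      (((m.factorial : K))⁻¹ * (-1 : K) ^ m) • (⇑δ)^[m] a) = 0 := by
    rw [myiter_sum]
    refine Finset.sum_eq_zero fun m hm => ?_
    rw [myiter_smul, ← Function.iterate_add_apply,
      myiter_stable δ h (Nat.le_add_right _ _), smul_zero]
  rw [LNDexp_eq_sum hkill]
  simp_rw [myiter_sum, myiter_smul, ← Function.iterate_add_apply, Finset.smul_sum, smul_smul]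
  rw [← sum_triangle N (fun i j => (((i.factorial : K))⁻¹ * (((j.factorial : K))⁻¹ * (-1 : K) ^ j))
      • (⇑δ)^[i + j] a)
    (by
      intro i j hij
      rw [myiter_stable δ h hij, smul_zero])]
  have inner : ∀ n ∈ Finset.range N, ∑ k ∈ Finset.range (n + 1),
      (((k.factorial : K))⁻¹ * ((((n - k).factorial : K))⁻¹ * (-1 : K) ^ (n - k)))
        • (⇑δ)^[k + (n - k)] a = (if n = 0 then (1 : K) else 0) • (⇑δ)^[n] a := by
    intro n _
    rw [← alt_coeff (K := K) n, Finset.sum_smul]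
    refine Finset.sum_congr rfl fun k hk => ?_
    rw [Finset.mem_range] at hk
    have e : k + (n - k) = n := by omega
    rw [e]
  rw [Finset.sum_congr rfl inner]
  rw [Finset.sum_eq_single_of_mem 0 (Finset.mem_range.mpr (by omega))
    (fun m _ hm => by rw [if_neg hm, zero_smul])]
  simp

/-- exp of an LND as an algebra automorphism -/
noncomputable def expAlgEquiv (δ : Derivation K A A) (hδ : IsLND δ) : A ≃ₐ[K] A :=
  AlgEquiv.ofAlgHom (expAlgHom δ hδ) (expAlgHom (-δ) (IsLND_neg hδ))
    (AlgHom.ext fun a => LNDexp_leftinv hδ a)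
    (AlgHom.ext fun a => by
      have h := LNDexp_leftinv (δ := -δ) (IsLND_neg hδ) a
      rwa [neg_neg] at h)

theorem expAlgEquiv_apply (δ : Derivation K A A) (hδ : IsLND δ) (a : A) :
    expAlgEquiv δ hδ a = LNDexp δ a := rfl

theorem expAlgEquiv_mem_SAut (δ : Derivation K A A) (hδ : IsLND δ) :
    expAlgEquiv δ hδ ∈ SAut K A :=
  Subgroup.subset_closure ⟨δ, hδ, fun _ => rfl⟩
end Gen2

section Quot
variable {K R : Type*} [Field K] [CommRing R] [Algebra K R]

/-- a derivation preserving an ideal descends to the quotient -/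
noncomputable def quotDer (I : Ideal R) (δ : Derivation K R R) (h : ∀ x ∈ I, δ x ∈ I) :
    Derivation K (R ⧸ I) (R ⧸ I) :=
  Derivation.mk'
    (LinearMap.comp
      (Submodule.liftQ (I.restrictScalars K)
        ((Ideal.Quotient.mkₐ K I).toLinearMap.comp (δ : R →ₗ[K] R))
        (by
          intro x hx
          have hx' : x ∈ I := hx
          simp only [LinearMap.mem_ker, LinearMap.comp_apply, AlgHom.toLinearMap_apply,
            Derivation.coeFn_coe, Ideal.Quotient.mkₐ_eq_mk]
          rw [Ideal.Quotient.eq_zero_iff_mem]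
          exact h x hx'))
      (Submodule.Quotient.restrictScalarsEquiv K I).symm.toLinearMap)
    (by
      intro a b
      obtain ⟨x, rfl⟩ := Ideal.Quotient.mk_surjective a
      obtain ⟨y, rfl⟩ := Ideal.Quotient.mk_surjective b
      show _ = Ideal.Quotient.mk I x • _ + Ideal.Quotient.mk I y • _
      rw [smul_eq_mul, smul_eq_mul]
      simp only [LinearMap.comp_apply, LinearEquiv.coe_toLinearMap]
      rw [← map_mul]
      have hmk : ∀ z : R, (Submodule.Quotient.restrictScalarsEquiv K I).symm
          (Ideal.Quotient.mk I z) = Submodule.Quotient.mk z := fun z =>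
        Submodule.Quotient.restrictScalarsEquiv_symm_mk K I z
      rw [hmk, hmk, hmk, Submodule.liftQ_apply, Submodule.liftQ_apply, Submodule.liftQ_apply]
      simp only [LinearMap.comp_apply, AlgHom.toLinearMap_apply, Derivation.coeFn_coe,
        Ideal.Quotient.mkₐ_eq_mk]
      rw [Derivation.leibniz]
      try simp only [smul_eq_mul, map_add, map_mul]
      try ring)

theorem quotDer_mk (I : Ideal R) (δ : Derivation K R R) (h : ∀ x ∈ I, δ x ∈ I) (x : R) :
    quotDer I δ h (Ideal.Quotient.mk I x) = Ideal.Quotient.mk I (δ x) := by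
  show (LinearMap.comp _ _) _ = _
  simp only [LinearMap.comp_apply, LinearEquiv.coe_toLinearMap]
  rw [← Ideal.Quotient.mk_eq_mk, Submodule.Quotient.restrictScalarsEquiv_symm_mk,
    Submodule.liftQ_apply]
  simp only [LinearMap.comp_apply, AlgHom.toLinearMap_apply, Derivation.coeFn_coe,
    Ideal.Quotient.mkₐ_eq_mk]

theorem quotDer_iter_mk (I : Ideal R) (δ : Derivation K R R) (h : ∀ x ∈ I, δ x ∈ I)
    (n : ℕ) (x : R) :
    (⇑(quotDer I δ h))^[n] (Ideal.Quotient.mk I x) = Ideal.Quotient.mk I ((⇑δ)^[n] x) := by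
  induction n generalizing x with
  | zero => rfl
  | succ n ih => rw [Function.iterate_succ_apply, Function.iterate_succ_apply, quotDer_mk, ih]

theorem quotDer_isLND (I : Ideal R) (δ : Derivation K R R) (h : ∀ x ∈ I, δ x ∈ I)
    [CharZero K] (hδ : IsLND δ) : IsLND (quotDer I δ h) := by
  intro a
  obtain ⟨x, rfl⟩ := Ideal.Quotient.mk_surjective a
  obtain ⟨n, hn⟩ := hδ x
  exact ⟨n, by rw [quotDer_iter_mk, hn, map_zero]⟩

theorem LNDexp_quot_mk [CharZero K] (I : Ideal R) (δ : Derivation K R R)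
    (h : ∀ x ∈ I, δ x ∈ I) {N : ℕ} {x : R} (hx : (⇑δ)^[N] x = 0) :
    LNDexp (quotDer I δ h) (Ideal.Quotient.mk I x) =
      Ideal.Quotient.mk I (∑ n ∈ Finset.range N, ((n.factorial : K))⁻¹ • (⇑δ)^[n] x) := by
  have hq : (⇑(quotDer I δ h))^[N] (Ideal.Quotient.mk I x) = 0 := by
    rw [quotDer_iter_mk, hx, map_zero]
  rw [LNDexp_eq_sum hq, map_sum]
  refine Finset.sum_congr rfl fun n _ => ?_
  rw [quotDer_iter_mk]
  rw [← Ideal.Quotient.mkₐ_eq_mk K, ← map_smul]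
  try rfl
end Quot

theorem Derivation.map_prod' {K A : Type*} [CommSemiring K] [CommRing A] [Algebra K A]
    (δ : Derivation K A A) {ι : Type*} [DecidableEq ι] (s : Finset ι) (g : ι → A) :
    δ (∏ i ∈ s, g i) = ∑ i ∈ s, (∏ j ∈ s.erase i, g j) * δ (g i) := by
  induction s using Finset.induction_on with
  | empty => simp
  | insert x s' hx ih =>
    rw [Finset.prod_insert hx, Derivation.leibniz, smul_eq_mul, smul_eq_mul, ih,
      Finset.sum_insert hx, Finset.erase_insert hx]
    rw [Finset.mul_sum, add_comm]
    have hs : ∀ i ∈ s', g x * ((∏ j ∈ s'.erase i, g j) * δ (g i)) =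
        (∏ j ∈ (insert x s').erase i, g j) * δ (g i) := by
      intro i hi
      rw [Finset.erase_insert_of_ne (by rintro rfl; exact hx hi),
        Finset.prod_insert (fun hh => hx (Finset.mem_of_mem_erase hh))]
      ring
    rw [Finset.sum_congr rfl hs]


open MvPolynomial

/-- Index set of the variables `T_{0j}, T_{1j}, T_{2j}`. -/
abbrev TriIdx18 (n0 n1 n2 : ℕ) : Type :=
  Fin n0 ⊕ (Fin (n1 + 1) ⊕ Fin (n2 + 1))

section Tri
open MvPolynomial
variable {K : Type*} [Field K] [CharZero K] {n0 n1 n2 : ℕ}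

/-- the square-free part `T_{22}⋯T_{2n_2}` -/
noncomputable def Mp : MvPolynomial (TriIdx18 n0 n1 n2) K :=
  ∏ j ∈ Finset.univ.erase (0 : Fin (n2 + 1)), X (Sum.inr (Sum.inr j))

/-- the locally nilpotent derivation `t·(M ∂_i - (∂F/∂T_i) ∂_{T_{21}})` -/
noncomputable def triDer (i : TriIdx18 n0 n1 n2) (t : K)
    (F : MvPolynomial (TriIdx18 n0 n1 n2) K) :
    Derivation K (MvPolynomial (TriIdx18 n0 n1 n2) K) (MvPolynomial (TriIdx18 n0 n1 n2) K) :=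
  (C t * (Mp : MvPolynomial (TriIdx18 n0 n1 n2) K)) • pderiv i
    - (C t * pderiv i F) • pderiv (Sum.inr (Sum.inr 0))

theorem triDer_apply (i : TriIdx18 n0 n1 n2) (t : K)
    (F p : MvPolynomial (TriIdx18 n0 n1 n2) K) :
    triDer i t F p = C t * Mp * pderiv i p
      - C t * pderiv i F * pderiv (Sum.inr (Sum.inr (0 : Fin (n2 + 1)))) p := by
  simp only [triDer, Derivation.sub_apply, Derivation.smul_apply, smul_eq_mul]

theorem triDer_X_self (i : TriIdx18 n0 n1 n2) (t : K)
    (F : MvPolynomial (TriIdx18 n0 n1 n2) K)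
    (hi : ∀ k, i ≠ Sum.inr (Sum.inr k)) :
    triDer i t F (X i) = C t * Mp := by
  rw [triDer_apply, pderiv_X_self, pderiv_X_of_ne (hi 0), mul_one, mul_zero, sub_zero]

theorem triDer_X_other (i : TriIdx18 n0 n1 n2) (t : K)
    (F : MvPolynomial (TriIdx18 n0 n1 n2) K)
    (x : TriIdx18 n0 n1 n2) (hx : x ≠ i) (hx2 : x ≠ Sum.inr (Sum.inr 0)) :
    triDer i t F (X x) = 0 := by
  rw [triDer_apply, pderiv_X_of_ne hx, pderiv_X_of_ne hx2, mul_zero, mul_zero, sub_zero]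

theorem triDer_X_e21 (i : TriIdx18 n0 n1 n2) (t : K)
    (F : MvPolynomial (TriIdx18 n0 n1 n2) K)
    (hi : ∀ k, i ≠ Sum.inr (Sum.inr k)) :
    triDer i t F (X (Sum.inr (Sum.inr 0))) = -(C t * pderiv i F) := by
  rw [triDer_apply, pderiv_X_of_ne (Ne.symm (hi 0)), pderiv_X_self, mul_zero, mul_one, zero_sub]

theorem triDer_Mp (i : TriIdx18 n0 n1 n2) (t : K)
    (F : MvPolynomial (TriIdx18 n0 n1 n2) K)
    (hi : ∀ k, i ≠ Sum.inr (Sum.inr k)) :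
    triDer i t F (Mp : MvPolynomial (TriIdx18 n0 n1 n2) K) = 0 := by
  classical
  rw [Mp, Derivation.map_prod']
  refine Finset.sum_eq_zero fun j hj => ?_
  rw [triDer_X_other i t F _ (Ne.symm (hi j))
    (by simp only [ne_eq, Sum.inr.injEq]; exact fun h =>
      (Finset.mem_erase.mp hj).1 (by exact_mod_cast h)), mul_zero]

theorem triDer_X_self_two (i : TriIdx18 n0 n1 n2) (t : K)
    (F : MvPolynomial (TriIdx18 n0 n1 n2) K)
    (hi : ∀ k, i ≠ Sum.inr (Sum.inr k)) :
    triDer i t F (triDer i t F (X i)) = 0 := by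
  rw [triDer_X_self i t F hi, Derivation.leibniz, triDer_Mp i t F hi, smul_zero, zero_add]
  have hC : triDer i t F (C t) = 0 := by
    have : (C t : MvPolynomial (TriIdx18 n0 n1 n2) K) = algebraMap K _ t := by
      simp [MvPolynomial.algebraMap_eq]
    rw [this, Derivation.map_algebraMap]
  rw [hC, smul_zero]

/-- the trinomial `T_0^{l_0} + T_1^{l_1} + T_{21}⋯T_{2n_2}` -/
noncomputable def triF (l0 : Fin n0 → ℕ) (l1 : Fin (n1 + 1) → ℕ) :
    MvPolynomial (TriIdx18 n0 n1 n2) K :=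
  (∏ j, X (Sum.inl j) ^ l0 j) + (∏ j, X (Sum.inr (Sum.inl j)) ^ l1 j)
    + ∏ j, X (Sum.inr (Sum.inr j))

theorem pderiv_e21_triF (l0 : Fin n0 → ℕ) (l1 : Fin (n1 + 1) → ℕ) :
    pderiv (Sum.inr (Sum.inr 0)) (triF (K := K) (n0 := n0) (n1 := n1) (n2 := n2) l0 l1) = Mp := by
  classical
  rw [triF, map_add, map_add]
  have h0 : pderiv (Sum.inr (Sum.inr (0 : Fin (n2 + 1))))
      (∏ j, X (Sum.inl j) ^ l0 j : MvPolynomial (TriIdx18 n0 n1 n2) K) = 0 := by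
    rw [Derivation.map_prod']
    refine Finset.sum_eq_zero fun j _ => ?_
    rw [pderiv_pow, pderiv_X_of_ne (by simp), mul_zero, mul_zero]
  have h1 : pderiv (Sum.inr (Sum.inr (0 : Fin (n2 + 1))))
      (∏ j, X (Sum.inr (Sum.inl j)) ^ l1 j : MvPolynomial (TriIdx18 n0 n1 n2) K) = 0 := by
    rw [Derivation.map_prod']
    refine Finset.sum_eq_zero fun j _ => ?_
    rw [pderiv_pow, pderiv_X_of_ne (by simp), mul_zero, mul_zero]
  have h2 : pderiv (Sum.inr (Sum.inr (0 : Fin (n2 + 1))))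
      (∏ j, X (Sum.inr (Sum.inr j)) : MvPolynomial (TriIdx18 n0 n1 n2) K) = Mp := by
    rw [Derivation.map_prod']
    rw [Finset.sum_eq_single_of_mem (0 : Fin (n2 + 1)) (Finset.mem_univ _)
      (fun j _ hj => by rw [pderiv_X_of_ne (by simp [hj]), mul_zero])]
    rw [pderiv_X_self, mul_one]
    rfl
  rw [h0, h1, h2, zero_add, zero_add]

theorem triDer_triF (i : TriIdx18 n0 n1 n2) (t : K)
    (l0 : Fin n0 → ℕ) (l1 : Fin (n1 + 1) → ℕ) :
    triDer i t (triF l0 l1) (triF (K := K) l0 l1) = 0 := by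
  rw [triDer_apply, pderiv_e21_triF]
  ring

theorem triDer_preserves (i : TriIdx18 n0 n1 n2) (t : K)
    (l0 : Fin n0 → ℕ) (l1 : Fin (n1 + 1) → ℕ) :
    ∀ x ∈ Ideal.span {triF (K := K) (n0 := n0) (n1 := n1) (n2 := n2) l0 l1},
      triDer i t (triF l0 l1) x ∈ Ideal.span {triF (K := K) l0 l1} := by
  intro x hx
  rw [Ideal.mem_span_singleton'] at hx
  obtain ⟨g, rfl⟩ := hx
  rw [Derivation.leibniz, smul_eq_mul, smul_eq_mul, triDer_triF, mul_zero, zero_add]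
  rw [Ideal.mem_span_singleton']
  exact ⟨triDer i t (triF l0 l1) g, mul_comm _ _⟩

theorem triDer_isLND (i : TriIdx18 n0 n1 n2) (t : K)
    (l0 : Fin n0 → ℕ) (l1 : Fin (n1 + 1) → ℕ)
    (hi : ∀ k, i ≠ Sum.inr (Sum.inr k)) :
    IsLND (triDer i t (triF (K := K) l0 l1)) := by
  classical
  set δ := triDer i t (triF (K := K) (n0 := n0) (n1 := n1) (n2 := n2) l0 l1) with hδdef
  have hb : ∀ x : TriIdx18 n0 n1 n2, x ≠ Sum.inr (Sum.inr 0) → X x ∈ nilAlg δ := by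
    intro x hx
    by_cases hxi : x = i
    · subst hxi
      refine ⟨2, ?_⟩
      show δ (δ (X x)) = 0
      exact triDer_X_self_two x t _ hi
    · exact ⟨1, triDer_X_other i t _ x hxi hx⟩
  have hpd : ∀ v : TriIdx18 n0 n1 n2, pderiv i (X v) ∈ nilAlg δ := by
    intro v
    by_cases hv : v = i
    · subst hv; rw [pderiv_X_self]; exact one_mem _
    · rw [pderiv_X_of_ne hv]; exact zero_mem _
  have hprod : ∀ {m : Type} [Fintype m] (f : m → TriIdx18 n0 n1 n2),
      (∀ j, f j ≠ Sum.inr (Sum.inr 0)) → ∀ (e : m → ℕ),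
      pderiv i (∏ j, X (f j) ^ e j : MvPolynomial (TriIdx18 n0 n1 n2) K) ∈ nilAlg δ := by
    intro m _ f hf e
    rw [Derivation.map_prod']
    refine Subalgebra.sum_mem _ fun j _ => ?_
    refine mul_mem (Subalgebra.prod_mem _ fun k _ => pow_mem (hb (f k) (hf k)) _) ?_
    rw [pderiv_pow]
    exact mul_mem (mul_mem (Subalgebra.natCast_mem _ _) (pow_mem (hb (f j) (hf j)) _)) (hpd (f j))
  have hXe21 : X (Sum.inr (Sum.inr (0 : Fin (n2 + 1)))) ∈ nilAlg δ := by
    rw [nilAlg_iff_der]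
    show triDer i t (triF (K := K) l0 l1) (X (Sum.inr (Sum.inr 0))) ∈ nilAlg δ
    rw [triDer_X_e21 i t _ hi]
    refine Subalgebra.neg_mem _ (mul_mem ?_ ?_)
    · rw [show (C t : MvPolynomial (TriIdx18 n0 n1 n2) K) = algebraMap K _ t from by
        rw [MvPolynomial.algebraMap_eq]]
      exact Subalgebra.algebraMap_mem _ t
    · rw [triF, map_add, map_add]
      refine add_mem (add_mem ?_ ?_) ?_
      · exact hprod (fun j => Sum.inl j) (by simp) l0
      · exact hprod (fun j => Sum.inr (Sum.inl j)) (by simp) l1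
      · have hz : pderiv i (∏ j, X (Sum.inr (Sum.inr j)) : MvPolynomial (TriIdx18 n0 n1 n2) K)
            = 0 := by
          rw [Derivation.map_prod']
          refine Finset.sum_eq_zero fun j _ => ?_
          rw [pderiv_X_of_ne (Ne.symm (hi j)), mul_zero]
        rw [hz]; exact zero_mem _
  intro p
  have htop : (⊤ : Subalgebra K (MvPolynomial (TriIdx18 n0 n1 n2) K)) ≤ nilAlg δ := by
    rw [← MvPolynomial.adjoin_range_X]
    refine Algebra.adjoin_le ?_
    rintro _ ⟨x, rfl⟩
    rcases x with a | b
    · exact hb (Sum.inl a) (by simp)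
    rcases b with b1 | b2
    · exact hb _ (by simp)
    · by_cases h0 : b2 = 0
      · subst h0; exact hXe21
      · exact hb _ (by simp [h0])
  exact htop (by trivial : p ∈ (⊤ : Subalgebra K _))
end Tri


theorem stmt18 {K : Type*} [Field K] [IsAlgClosed K] [CharZero K]
    (n0 n1 n2 : ℕ)
    (l0 : Fin n0 → ℕ) (l1 : Fin (n1 + 1) → ℕ)
    (hl0 : ∀ j, 0 < l0 j) (hl1 : ∀ j, 0 < l1 j)
    (T0 T1 T2 : MvPolynomial (TriIdx18 n0 n1 n2) K)
    (hT0 : T0 = ∏ j, X (Sum.inl j) ^ l0 j)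
    (hT1 : T1 = ∏ j, X (Sum.inr (Sum.inl j)) ^ l1 j)
    (hT2 : T2 = ∏ j, X (Sum.inr (Sum.inr j)))
    (I : Ideal (MvPolynomial (TriIdx18 n0 n1 n2) K))
    (hI : I = Ideal.span {T0 + T1 + T2})
    (c : Fin (n2 + 1) → K) (hc : ∀ j : Fin (n2 + 1), j ≠ 0 → c j ≠ 0)
    -- two points of `X(c_2,…,c_{n_2})`, i.e. `K`-points of `X` with `T_{2j} = c_j` for `j ≥ 2`
    (P Q : (MvPolynomial (TriIdx18 n0 n1 n2) K ⧸ I) →ₐ[K] K)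
    (hP : ∀ j : Fin (n2 + 1), j ≠ 0 →
      P (Ideal.Quotient.mk I (X (Sum.inr (Sum.inr j)))) = c j)
    (hQ : ∀ j : Fin (n2 + 1), j ≠ 0 →
      Q (Ideal.Quotient.mk I (X (Sum.inr (Sum.inr j)))) = c j) :
    ∃ φ ∈ SAut K (MvPolynomial (TriIdx18 n0 n1 n2) K ⧸ I),
      ∀ a, Q a = P (φ a) := by
  classical
  have hI2 : I = Ideal.span {triF (K := K) (n0 := n0) (n1 := n1) (n2 := n2) l0 l1} := by
    rw [hI, hT0, hT1, hT2]; rfl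
  set ι : (Fin n0 ⊕ Fin (n1 + 1)) → TriIdx18 n0 n1 n2 :=
    Sum.elim Sum.inl (fun j => Sum.inr (Sum.inl j)) with hι
  have hι21 : ∀ (u : Fin n0 ⊕ Fin (n1 + 1)) (k : Fin (n2 + 1)),
      ι u ≠ Sum.inr (Sum.inr k) := by
    rintro (a | b) k <;> simp [hι]
  have hιinj : Function.Injective ι := by
    rintro (a | a) (b | b) h <;> simp [hι] at h <;> simp [h]
  set Cc : K := ∏ j ∈ Finset.univ.erase (0 : Fin (n2 + 1)), c j with hCcdef
  have hCc : Cc ≠ 0 :=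
    Finset.prod_ne_zero_iff.mpr fun j hj => hc j (Finset.mem_erase.mp hj).1
  have hmkalg : ∀ t : K, Ideal.Quotient.mk I (C t)
      = algebraMap K (MvPolynomial (TriIdx18 n0 n1 n2) K ⧸ I) t := by
    intro t
    rw [show (C t : MvPolynomial (TriIdx18 n0 n1 n2) K) = algebraMap K _ t from by
      rw [MvPolynomial.algebraMap_eq]]
    rfl
  have hMpval : ∀ (S : (MvPolynomial (TriIdx18 n0 n1 n2) K ⧸ I) →ₐ[K] K),
      (∀ j : Fin (n2 + 1), j ≠ 0 → S (Ideal.Quotient.mk I (X (Sum.inr (Sum.inr j)))) = c j) →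
      S (Ideal.Quotient.mk I (Mp : MvPolynomial (TriIdx18 n0 n1 n2) K)) = Cc := by
    intro S hS
    rw [Mp, map_prod, map_prod, hCcdef]
    exact Finset.prod_congr rfl fun j hj => hS j (Finset.mem_erase.mp hj).1
  -- the elementary move
  have moveLemma : ∀ (P' : (MvPolynomial (TriIdx18 n0 n1 n2) K ⧸ I) →ₐ[K] K)
      (u : Fin n0 ⊕ Fin (n1 + 1)) (t : K),
      ∃ φ ∈ SAut K (MvPolynomial (TriIdx18 n0 n1 n2) K ⧸ I),
        (P'.comp φ.toAlgHom) (Ideal.Quotient.mk I (X (ι u)))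
          = P' (Ideal.Quotient.mk I (X (ι u)))
            + t * P' (Ideal.Quotient.mk I (Mp : MvPolynomial (TriIdx18 n0 n1 n2) K)) ∧
        ∀ x, x ≠ ι u → x ≠ Sum.inr (Sum.inr 0) →
          (P'.comp φ.toAlgHom) (Ideal.Quotient.mk I (X x))
            = P' (Ideal.Quotient.mk I (X x)) := by
    intro P' u t
    set δ := triDer (ι u) t (triF (K := K) l0 l1) with hδdef
    have hpres : ∀ x ∈ I, δ x ∈ I := by
      rw [hI2]; exact triDer_preserves (ι u) t l0 l1
    have hlnd : IsLND δ := triDer_isLND (ι u) t l0 l1 (hι21 u)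
    have hlndq := quotDer_isLND I δ hpres hlnd
    refine ⟨expAlgEquiv (quotDer I δ hpres) hlndq, expAlgEquiv_mem_SAut _ _, ?_, ?_⟩
    · have hkill : (⇑δ)^[2] (X (ι u)) = 0 := by
        show δ (δ (X (ι u))) = 0
        exact triDer_X_self_two (ι u) t _ (hι21 u)
      rw [AlgHom.comp_apply, AlgEquiv.toAlgHom_eq_coe, AlgEquiv.coe_toAlgHom, expAlgEquiv_apply,
        LNDexp_quot_mk I δ hpres hkill]
      have hsum : (∑ n ∈ Finset.range 2, ((n.factorial : K))⁻¹ • (⇑δ)^[n] (X (ι u)))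
          = X (ι u) + C t * Mp := by
        rw [Finset.sum_range_succ, Finset.sum_range_one]
        simp only [Function.iterate_zero_apply, Function.iterate_one, Nat.factorial_zero,
          Nat.factorial_one, Nat.cast_one, inv_one, one_smul]
        rw [hδdef, triDer_X_self (ι u) t _ (hι21 u)]
      rw [hsum, map_add, map_add, map_mul, hmkalg, map_mul, AlgHom.commutes,
        Algebra.algebraMap_self_apply]
    · intro x hx1 hx2
      have hkill : (⇑δ)^[1] (X x) = 0 := triDer_X_other (ι u) t _ x hx1 hx2
      rw [AlgHom.comp_apply, AlgEquiv.toAlgHom_eq_coe, AlgEquiv.coe_toAlgHom, expAlgEquiv_apply,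
        LNDexp_quot_mk I δ hpres hkill]
      rw [Finset.sum_range_one]
      simp only [Function.iterate_zero_apply, Nat.factorial_zero, Nat.cast_one, inv_one, one_smul]
  -- the relation forced by F = 0
  have hrel : ∀ S : (MvPolynomial (TriIdx18 n0 n1 n2) K ⧸ I) →ₐ[K] K,
      (∏ j, S (Ideal.Quotient.mk I (X (Sum.inl j))) ^ l0 j)
        + (∏ j, S (Ideal.Quotient.mk I (X (Sum.inr (Sum.inl j)))) ^ l1 j)
        + S (Ideal.Quotient.mk I (X (Sum.inr (Sum.inr 0))))
          * S (Ideal.Quotient.mk I (Mp : MvPolynomial (TriIdx18 n0 n1 n2) K)) = 0 := by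
    intro S
    have h0 : S (Ideal.Quotient.mk I (triF (K := K) l0 l1)) = 0 := by
      rw [Ideal.Quotient.eq_zero_iff_mem.mpr
        (by rw [hI2]; exact Ideal.subset_span (Set.mem_singleton _)), map_zero]
    rw [triF] at h0
    have hT2split : (∏ j, X (Sum.inr (Sum.inr j)) : MvPolynomial (TriIdx18 n0 n1 n2) K)
        = X (Sum.inr (Sum.inr 0)) * Mp := by
      rw [Mp]
      exact (Finset.mul_prod_erase Finset.univ
        (fun j : Fin (n2 + 1) => (X (Sum.inr (Sum.inr j)) : MvPolynomial (TriIdx18 n0 n1 n2) K))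
        (Finset.mem_univ (0 : Fin (n2 + 1)))).symm
    rw [hT2split, map_add, map_add, map_mul, map_add, map_add, map_mul] at h0
    rw [map_prod, map_prod, map_prod, map_prod] at h0
    simp only [map_pow] at h0
    exact h0
  -- main induction over a list of movable coordinates
  have main : ∀ (l : List (Fin n0 ⊕ Fin (n1 + 1)))
      (P' : (MvPolynomial (TriIdx18 n0 n1 n2) K ⧸ I) →ₐ[K] K),
      (∀ j : Fin (n2 + 1), j ≠ 0 → P' (Ideal.Quotient.mk I (X (Sum.inr (Sum.inr j)))) = c j) →
      ∃ φ ∈ SAut K (MvPolynomial (TriIdx18 n0 n1 n2) K ⧸ I),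
        (∀ u ∈ l, (P'.comp φ.toAlgHom) (Ideal.Quotient.mk I (X (ι u)))
          = Q (Ideal.Quotient.mk I (X (ι u)))) ∧
        (∀ u, u ∉ l → (P'.comp φ.toAlgHom) (Ideal.Quotient.mk I (X (ι u)))
          = P' (Ideal.Quotient.mk I (X (ι u)))) ∧
        (∀ j : Fin (n2 + 1), j ≠ 0 →
          (P'.comp φ.toAlgHom) (Ideal.Quotient.mk I (X (Sum.inr (Sum.inr j)))) = c j) := by
    intro l
    induction l with
    | nil =>
      intro P' hP'
      refine ⟨1, Subgroup.one_mem _, ?_, ?_, ?_⟩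
      · intro u hu; exact absurd hu List.not_mem_nil
      · intro u _; rfl
      · intro j hj; exact hP' j hj
    | cons u l ih =>
      intro P' hP'
      obtain ⟨φ1, hφ1mem, hφ1a, hφ1b⟩ :=
        moveLemma P' u ((Q (Ideal.Quotient.mk I (X (ι u)))
          - P' (Ideal.Quotient.mk I (X (ι u)))) / Cc)
      set P'' := P'.comp φ1.toAlgHom with hP''def
      have hP''2 : ∀ j : Fin (n2 + 1), j ≠ 0 →
          P'' (Ideal.Quotient.mk I (X (Sum.inr (Sum.inr j)))) = c j := by
        intro j hj
        rw [hP''def, hφ1b _ (Ne.symm (hι21 u j))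
          (by simp only [ne_eq, Sum.inr.injEq]; exact fun h => hj (by exact_mod_cast h))]
        exact hP' j hj
      have hP''u : P'' (Ideal.Quotient.mk I (X (ι u))) = Q (Ideal.Quotient.mk I (X (ι u))) := by
        rw [hP''def, hφ1a, hMpval P' hP', div_mul_cancel₀ _ hCc]
        ring
      have hP''other : ∀ u', u' ≠ u → P'' (Ideal.Quotient.mk I (X (ι u')))
          = P' (Ideal.Quotient.mk I (X (ι u'))) := by
        intro u' hu'
        exact hφ1b _ (fun h => hu' (hιinj h)) (hι21 u' 0)
      obtain ⟨ψ, hψmem, hψ1, hψ2, hψ3⟩ := ih P'' hP''2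
      have hcomp : ∀ y, (P'.comp (φ1 * ψ).toAlgHom) y = (P''.comp ψ.toAlgHom) y := by
        intro y
        simp only [hP''def, AlgHom.comp_apply, AlgEquiv.toAlgHom_eq_coe, AlgEquiv.coe_toAlgHom,
          AlgEquiv.mul_apply]
      refine ⟨φ1 * ψ, mul_mem hφ1mem hψmem, ?_, ?_, ?_⟩
      · intro u0 hu0
        rw [hcomp]
        rcases List.mem_cons.mp hu0 with heq | hl
        · rw [heq]
          rcases Classical.em (u ∈ l) with hm | hm
          · exact hψ1 u hm
          · rw [hψ2 u hm, hP''u]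
        · exact hψ1 _ hl
      · intro u0 hu0
        rw [hcomp, hψ2 u0 (fun h => hu0 (List.mem_cons_of_mem u h)),
          hP''other u0 (fun h => hu0 (h ▸ List.mem_cons_self (a := u) (l := l)))]
      · intro j hj
        rw [hcomp, hψ3 j hj]
  obtain ⟨φ, hφmem, hφ1, _, hφ3⟩ := main (Finset.univ : Finset (Fin n0 ⊕ Fin (n1 + 1))).toList P hP
  have hall : ∀ u, (P.comp φ.toAlgHom) (Ideal.Quotient.mk I (X (ι u)))
      = Q (Ideal.Quotient.mk I (X (ι u))) :=
    fun u => hφ1 u (by rw [Finset.mem_toList]; exact Finset.mem_univ u)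
  have halll : ∀ a : Fin n0, (P.comp φ.toAlgHom) (Ideal.Quotient.mk I (X (Sum.inl a)))
      = Q (Ideal.Quotient.mk I (X (Sum.inl a))) := fun a => hall (Sum.inl a)
  have hallr : ∀ a : Fin (n1 + 1),
      (P.comp φ.toAlgHom) (Ideal.Quotient.mk I (X (Sum.inr (Sum.inl a))))
      = Q (Ideal.Quotient.mk I (X (Sum.inr (Sum.inl a)))) := fun a => hall (Sum.inr a)
  have he21 : (P.comp φ.toAlgHom) (Ideal.Quotient.mk I (X (Sum.inr (Sum.inr 0))))
      = Q (Ideal.Quotient.mk I (X (Sum.inr (Sum.inr 0)))) := by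
    have h1 := hrel (P.comp φ.toAlgHom)
    have h2 := hrel Q
    have hMp1 : (P.comp φ.toAlgHom) (Ideal.Quotient.mk I (Mp : MvPolynomial _ K)) = Cc :=
      hMpval _ hφ3
    have hMp2 : Q (Ideal.Quotient.mk I (Mp : MvPolynomial _ K)) = Cc := hMpval _ hQ
    rw [hMp1] at h1
    rw [hMp2] at h2
    have hprod0 : (∏ j, (P.comp φ.toAlgHom) (Ideal.Quotient.mk I (X (Sum.inl j))) ^ l0 j)
        = ∏ j, Q (Ideal.Quotient.mk I (X (Sum.inl j))) ^ l0 j :=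
      Finset.prod_congr rfl fun j _ => by rw [halll j]
    have hprod1 :
        (∏ j, (P.comp φ.toAlgHom) (Ideal.Quotient.mk I (X (Sum.inr (Sum.inl j)))) ^ l1 j)
        = ∏ j, Q (Ideal.Quotient.mk I (X (Sum.inr (Sum.inl j)))) ^ l1 j :=
      Finset.prod_congr rfl fun j _ => by rw [hallr j]
    rw [hprod0, hprod1] at h1
    have hdiff : ((P.comp φ.toAlgHom) (Ideal.Quotient.mk I (X (Sum.inr (Sum.inr 0))))
        - Q (Ideal.Quotient.mk I (X (Sum.inr (Sum.inr 0))))) * Cc = 0 := by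
      linear_combination h1 - h2
    rcases mul_eq_zero.mp hdiff with h | h
    · exact sub_eq_zero.mp h
    · exact absurd h hCc
  have hPQ : P.comp φ.toAlgHom = Q := by
    simp only [AlgHom.comp_apply, AlgEquiv.toAlgHom_eq_coe, AlgHom.coe_coe]
      at halll hallr he21 hφ3
    apply Ideal.Quotient.algHom_ext
    apply MvPolynomial.algHom_ext
    intro x
    simp only [AlgHom.comp_apply, Ideal.Quotient.mkₐ_eq_mk, AlgEquiv.toAlgHom_eq_coe,
      AlgHom.coe_coe]
    rcases x with a | b
    · exact halll a
    rcases b with b1 | b2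
    · exact hallr b1
    · rcases Classical.em (b2 = 0) with h0 | h0
      · subst h0
        exact he21
      · rw [hφ3 b2 h0, hQ b2 h0]
  exact ⟨φ, hφmem, fun a => by rw [← hPQ]; rfl⟩
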